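/- Let α be an action of a discrete group Γ on a von Neumann algebra N in standard form, and suppose the projection p onto the U_α-invariant vectors belongs to N. If every α-invariant state on N is a weak-* limit of normal α-invariant states, then every state ψ on L(H) satisfying ψ(U_{α_t}) = 1 for all t ∈ Γ satisfies ψ(p) ≠ 0. -/

import Mathlib

open ComplexOrder

variable {H : Type*} [NormedAddCommGroup H] [InnerProductSpace ℂ H] [CompleteSpace H]

/-- A linear functional on a von Neumann algebra `N ⊆ L(H)` in standard form is *normal*
(σ-weakly continuous) if it is given by a countable, square-summable family of vector
functionals. -/
def NormalFunctional (N : VonNeumannAlgebra H) (φ : ↥N.toStarSubalgebra →ₗ[ℂ] ℂ) : Prop :=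
  ∃ ξ η : ℕ → H, Summable (fun n => ‖ξ n‖ ^ 2) ∧ Summable (fun n => ‖η n‖ ^ 2) ∧
    ∀ x : ↥N.toStarSubalgebra, φ x = ∑' n, (inner ℂ (η n) ((x : H →L[ℂ] H) (ξ n)) : ℂ)

/-- A state on the von Neumann algebra `N`: a positive linear functional of value `1` at `1`. -/
def IsStateOn (N : VonNeumannAlgebra H) (φ : ↥N.toStarSubalgebra →ₗ[ℂ] ℂ) : Prop :=
  φ 1 = 1 ∧ ∀ x : ↥N.toStarSubalgebra, 0 ≤ φ (star x * x)

/-- Standard form data `(N, H, J, P)` for an action of a discrete group `Γ` on a von Neumann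
algebra `N`, together with the standard implementation `U = U_α` of the action `α` (so the
action is `α_t = Ad (U t)`, which preserves `N`, commutes with `J` and preserves the
self-dual cone `P`).  The characteristic standard-form properties of `P` (existence and
uniqueness of representing vectors for positive normal functionals, and the
Powers–Størmer-type inequality) are part of the data. -/
structure StandardAction (Γ : Type*) [Group Γ] (H : Type*) [NormedAddCommGroup H]
    [InnerProductSpace ℂ H] [CompleteSpace H] (N : VonNeumannAlgebra H) where
  /-- the conjugation `J` -/
  J : H → H
  hJ_inner : ∀ ξ η : H, (inner ℂ (J ξ) (J η) : ℂ) = inner ℂ η ξ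
  hJ_invol : ∀ ξ : H, J (J ξ) = ξ
  /-- the self-dual positive cone -/
  P : Set H
  hP_cone : ∀ ζ ∈ P, ∀ r : ℝ, 0 ≤ r → r • ζ ∈ P
  hP_selfdual : ∀ ξ : H, ξ ∈ P ↔ ∀ η ∈ P, 0 ≤ (inner ℂ ξ η : ℂ)
  /-- the implementing unitary representation `U_α` of `Γ` -/
  U : Γ →* unitary (H →L[ℂ] H)
  /-- `Ad (U t)` preserves `N`; this conjugation is the action `α` -/
  hUN : ∀ t : Γ, ∀ x : H →L[ℂ] H, x ∈ N →
    (U t : H →L[ℂ] H) * x * star (U t : H →L[ℂ] H) ∈ N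
  hUJ : ∀ (t : Γ) (ξ : H), (U t : H →L[ℂ] H) (J ξ) = J ((U t : H →L[ℂ] H) ξ)
  hUP : ∀ t : Γ, ∀ ζ ∈ P, (U t : H →L[ℂ] H) ζ ∈ P
  /-- uniqueness of the representing vector in `P` of a positive normal functional -/
  hP_uniq : ∀ ζ₁ ∈ P, ∀ ζ₂ ∈ P,
    (∀ x : H →L[ℂ] H, x ∈ N → (inner ℂ ζ₁ (x ζ₁) : ℂ) = inner ℂ ζ₂ (x ζ₂)) → ζ₁ = ζ₂
  /-- every positive normal functional on `N` is of the form `ω_ζ` for some `ζ ∈ P` -/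
  hP_rep : ∀ φ : ↥N.toStarSubalgebra →ₗ[ℂ] ℂ, NormalFunctional N φ →
    (∀ x : ↥N.toStarSubalgebra, 0 ≤ φ (star x * x)) →
    ∃ ζ ∈ P, ∀ x : ↥N.toStarSubalgebra, φ x = inner ℂ ζ ((x : H →L[ℂ] H) ζ)
  /-- the Powers–Størmer-type inequality `‖ζ₁ - ζ₂‖² ≤ ‖ω_{ζ₁} - ω_{ζ₂}‖` -/
  hP_PS : ∀ ζ₁ ∈ P, ∀ ζ₂ ∈ P, ∀ ε > (0 : ℝ), ∃ x : H →L[ℂ] H, x ∈ N ∧ ‖x‖ ≤ 1 ∧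
    ‖ζ₁ - ζ₂‖ ^ 2 ≤ ‖(inner ℂ ζ₁ (x ζ₁) : ℂ) - inner ℂ ζ₂ (x ζ₂)‖ + ε

/-- A functional on `N` is `α`-invariant, where `α_t = Ad (U t)` is the action encoded by the
standard action data `D`. -/
def StandardAction.Invariant {Γ : Type*} [Group Γ] {N : VonNeumannAlgebra H}
    (D : StandardAction Γ H N) (φ : ↥N.toStarSubalgebra →ₗ[ℂ] ℂ) : Prop :=
  ∀ t : Γ, ∀ x y : ↥N.toStarSubalgebra,
    (y : H →L[ℂ] H) = (D.U t : H →L[ℂ] H) * (x : H →L[ℂ] H) * star (D.U t : H →L[ℂ] H) →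
    φ y = φ x

/-- The representation `U_α` has a spectral gap. -/
def StandardAction.HasSpectralGap {Γ : Type*} [Group Γ] {N : VonNeumannAlgebra H}
    (D : StandardAction Γ H N) : Prop :=
  ¬ (∀ ε > (0 : ℝ), ∀ F : Finset Γ, ∃ ξ : H, ‖ξ‖ = 1 ∧
      (∀ η : H, (∀ t : Γ, (D.U t : H →L[ℂ] H) η = η) → (inner ℂ ξ η : ℂ) = 0) ∧
      ∀ t ∈ F, ‖(D.U t : H →L[ℂ] H) ξ - ξ‖ < ε)

section AuxLemmas
variable {H : Type*} [NormedAddCommGroup H] [InnerProductSpace ℂ H] [CompleteSpace H]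

lemma pos_herm (ψ : (H →L[ℂ] H) →ₗ[ℂ] ℂ)
    (hpos : ∀ x : H →L[ℂ] H, 0 ≤ ψ (star x * x)) (a : H →L[ℂ] H) :
    ψ (star a) = starRingEnd ℂ (ψ a) := by
  have expand : ∀ c : ℂ,
      star (a + c • 1) * (a + c • 1)
        = star a * a + c • star a + (starRingEnd ℂ c) • a
          + (c * starRingEnd ℂ c) • (1 : H →L[ℂ] H) := by
    intro c
    simp only [star_add, star_smul, star_one, RCLike.star_def, add_mul, mul_add,
      smul_mul_assoc, mul_smul_comm, one_mul, mul_one, smul_smul, smul_add]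
    abel
  have him : ∀ c : ℂ,
      (ψ (star a * a) + c * ψ (star a) + (starRingEnd ℂ c) * ψ a
        + (c * starRingEnd ℂ c) * ψ 1).im = 0 := by
    intro c
    have h := hpos (a + c • 1)
    rw [expand c] at h
    simp only [map_add, map_smul, smul_eq_mul] at h
    exact ((Complex.nonneg_iff.mp h).2).symm
  have hAim : (ψ (star a * a)).im = 0 := ((Complex.nonneg_iff.mp (hpos a)).2).symm
  have hWim : (ψ 1).im = 0 := by
    have := hpos 1
    rw [star_one, one_mul] at this
    exact ((Complex.nonneg_iff.mp this).2).symm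
  have h1 := him 1
  have hI := him Complex.I
  rw [Complex.conj_I] at hI
  simp only [map_one, one_mul, Complex.add_im, Complex.mul_im, Complex.one_re,
    Complex.one_im, Complex.I_re, Complex.I_im, Complex.neg_im, Complex.neg_re,
    Complex.mul_re, neg_mul, neg_neg, hAim, hWim] at h1 hI
  apply Complex.ext <;>
    simp only [Complex.conj_re, Complex.conj_im] <;> nlinarith [h1, hI]

lemma pos_cancel (ψ : (H →L[ℂ] H) →ₗ[ℂ] ℂ)
    (hpos : ∀ x : H →L[ℂ] H, 0 ≤ ψ (star x * x)) {a : H →L[ℂ] H}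
    (ha : ψ (star a * a) = 0) (b : H →L[ℂ] H) : ψ (b * a) = 0 := by
  have hre : ∀ b : H →L[ℂ] H, (ψ (star b * a)).re = 0 := by
    intro b
    have hCpos := hpos b
    obtain ⟨hC0, hCim⟩ := Complex.nonneg_iff.mp hCpos
    set C : ℝ := (ψ (star b * b)).re with hCdef
    set Z : ℂ := ψ (star b * a) with hZdef
    have hconj : ψ (star a * b) = starRingEnd ℂ Z := by
      have : star a * b = star (star b * a) := by simp [star_mul]
      rw [this, pos_herm ψ hpos]
    have key : ∀ t : ℝ, 0 ≤ t ^ 2 * C + 2 * t * Z.re := by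
      intro t
      have h := hpos ((t : ℂ) • b + a)
      have hexp : star ((t : ℂ) • b + a) * ((t : ℂ) • b + a)
          = ((t : ℂ) * t) • (star b * b) + (t : ℂ) • (star b * a)
            + (t : ℂ) • (star a * b) + star a * a := by
        simp only [star_add, star_smul, RCLike.star_def, Complex.conj_ofReal,
          add_mul, mul_add, smul_mul_assoc, mul_smul_comm, smul_smul, smul_add]
        abel
      rw [hexp] at h
      simp only [map_add, map_smul, smul_eq_mul, ha, add_zero, hconj] at h
      obtain ⟨hre', _⟩ := Complex.nonneg_iff.mp h
      simp only [Complex.add_re, Complex.mul_re, Complex.ofReal_re, Complex.ofReal_im,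
        Complex.conj_re, Complex.conj_im, Complex.mul_im, zero_mul, mul_zero, sub_zero,
        zero_sub, add_zero] at hre'
      nlinarith [hre']
    have hC1 : (0:ℝ) < C + 1 := by linarith
    set s : ℝ := Z.re / (C + 1) with hsdef
    have hz : Z.re = s * (C + 1) := by rw [hsdef, div_mul_cancel₀ _ hC1.ne']
    have h := key (-s)
    rw [hz] at h
    have hs2 : s ^ 2 = 0 := le_antisymm (by nlinarith [h, hC0]) (sq_nonneg s)
    have hs : s = 0 := by
      have := sq_eq_zero_iff.mp hs2
      exact this
    rw [hz, hs, zero_mul]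
  have him : (ψ (star (star b) * a)).im = 0 := by
    have h := hre (Complex.I • star b)
    have : star (Complex.I • star b) * a = (-Complex.I) • (star (star b) * a) := by
      simp [star_smul, Complex.conj_I, smul_mul_assoc]
    rw [this] at h
    simp only [map_smul, smul_eq_mul, Complex.mul_re, Complex.neg_re, Complex.neg_im,
      Complex.I_re, Complex.I_im, neg_zero, zero_mul, zero_sub, neg_neg, neg_mul, one_mul] at h
    linarith [h]
  have := hre (star b)
  rw [star_star] at this him
  exact Complex.ext this him

end AuxLemmas

/-- Suppose the orthogonal projection `p` onto the `U_α`-invariant vectors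
belongs to `N`.  If every `α`-invariant state on `N` is a weak-* limit of normal
`α`-invariant states (statement (G4)), then every state `ψ` on `L(H)` with `ψ (U_{α_t}) = 1`
for all `t ∈ Γ` satisfies `ψ p ≠ 0` (statement (G1)). -/
theorem standard_implies_state_nonvanishing_on_proj
    {Γ : Type*} [Group Γ]
    {H : Type*} [NormedAddCommGroup H] [InnerProductSpace ℂ H] [CompleteSpace H]
    {N : VonNeumannAlgebra H} (D : StandardAction Γ H N)
    (p : H →L[ℂ] H) (hsa : IsSelfAdjoint p) (hidem : p * p = p)
    (hfix : ∀ ξ : H, p ξ = ξ ↔ ∀ t : Γ, (D.U t : H →L[ℂ] H) ξ = ξ)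
    (hpN : p ∈ N)
    (hstd : ∀ m : ↥N.toStarSubalgebra →ₗ[ℂ] ℂ, IsStateOn N m → D.Invariant m →
      ∀ ε > (0 : ℝ), ∀ F : Finset ↥N.toStarSubalgebra,
        ∃ g : ↥N.toStarSubalgebra →ₗ[ℂ] ℂ,
          IsStateOn N g ∧ D.Invariant g ∧ NormalFunctional N g ∧
          ∀ x ∈ F, ‖m x - g x‖ < ε) :
    ∀ ψ : (H →L[ℂ] H) →ₗ[ℂ] ℂ,
      (∀ x : H →L[ℂ] H, 0 ≤ ψ (star x * x)) → ψ 1 = 1 →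
      (∀ t : Γ, ψ (D.U t : H →L[ℂ] H) = 1) → ψ p ≠ 0 := by
  intro ψ hpos hψ1 hψU
  -- invariance of ψ under multiplication by the unitaries
  have hherm := pos_herm ψ hpos
  have hconjψ : ∀ a : H →L[ℂ] H, ψ (star a) = starRingEnd ℂ (ψ a) := hherm
  have hUfacts : ∀ t : Γ, ∀ b : H →L[ℂ] H,
      ψ (b * (D.U t : H →L[ℂ] H)) = ψ b ∧ ψ (b * star (D.U t : H →L[ℂ] H)) = ψ b := by
    intro t b
    set u : H →L[ℂ] H := (D.U t : H →L[ℂ] H) with hu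
    have hu1 : star u * u = 1 := Unitary.coe_star_mul_self (D.U t)
    have hu2 : u * star u = 1 := Unitary.coe_mul_star_self (D.U t)
    have hψu : ψ u = 1 := hψU t
    have hψsu : ψ (star u) = 1 := by
      rw [hconjψ, hψu, map_one]
    constructor
    · have ha : ψ (star (u - 1) * (u - 1)) = 0 := by
        have hexp : star (u - 1) * (u - 1) = star u * u - star u - u + 1 := by
          simp only [star_sub, star_one, sub_mul, mul_sub, one_mul, mul_one]
          abel
        rw [hexp]
        simp only [map_add, map_sub, hu1, hψ1, hψu, hψsu]
        ring
      have h := pos_cancel ψ hpos ha b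
      rw [mul_sub, mul_one, map_sub, sub_eq_zero] at h
      exact h
    · have ha : ψ (star (star u - 1) * (star u - 1)) = 0 := by
        have hexp : star (star u - 1) * (star u - 1) = u * star u - u - star u + 1 := by
          simp only [star_sub, star_one, star_star, sub_mul, mul_sub, one_mul, mul_one]
          abel
        rw [hexp]
        simp only [map_add, map_sub, hu2, hψ1, hψu, hψsu]
        ring
      have h := pos_cancel ψ hpos ha b
      rw [mul_sub, mul_one, map_sub, sub_eq_zero] at h
      exact h
  have hleft : ∀ t : Γ, ∀ b : H →L[ℂ] H,
      ψ ((D.U t : H →L[ℂ] H) * b) = ψ b := by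
    intro t b
    set u : H →L[ℂ] H := (D.U t : H →L[ℂ] H) with hu
    have h1 : u * b = star (star b * star u) := by simp [star_mul]
    rw [h1, hconjψ, (hUfacts t (star b)).2, hconjψ, starRingEnd_self_apply]
  -- the restriction of ψ to N
  set m : ↥N.toStarSubalgebra →ₗ[ℂ] ℂ :=
    ψ.comp ((N.toStarSubalgebra.subtype).toAlgHom.toLinearMap) with hm
  have hmval : ∀ x : ↥N.toStarSubalgebra, m x = ψ (x : H →L[ℂ] H) := fun _ => rfl
  have hmstate : IsStateOn N m := by
    constructor
    · rw [hmval]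
      simpa using hψ1
    · intro x
      rw [hmval]
      have : ((star x * x : ↥N.toStarSubalgebra) : H →L[ℂ] H)
          = star (x : H →L[ℂ] H) * (x : H →L[ℂ] H) := by
        simp
      rw [this]
      exact hpos _
  have hminv : D.Invariant m := by
    intro t x y hxy
    rw [hmval, hmval, hxy, (hUfacts t _).2, hleft]
  obtain ⟨g, hgstate, hginv, hgnorm, hgclose⟩ :=
    hstd m hmstate hminv (1/2) (by norm_num) {⟨p, hpN⟩}
  -- the representing vector of g
  obtain ⟨ζ, hζP, hζrep⟩ := D.hP_rep g hgnorm hgstate.2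
  have hζ1 : (inner ℂ ζ ζ : ℂ) = 1 := by
    have h := hζrep 1
    rw [hgstate.1] at h
    simpa using h.symm
  -- ζ is U-invariant
  have hUζ : ∀ t : Γ, (D.U t : H →L[ℂ] H) ζ = ζ := by
    intro t
    set u : H →L[ℂ] H := (D.U t : H →L[ℂ] H) with hu
    have hu1 : star u * u = 1 := Unitary.coe_star_mul_self (D.U t)
    have hu2 : u * star u = 1 := Unitary.coe_mul_star_self (D.U t)
    apply D.hP_uniq (u ζ) (D.hUP t ζ hζP) ζ hζP
    intro x hx
    have hx' : star u * x * u ∈ N := by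
      have h := D.hUN t⁻¹ x hx
      have hcoe : ((D.U t⁻¹ : unitary (H →L[ℂ] H)) : H →L[ℂ] H) = star u := by
        rw [map_inv]; rfl
      rw [hcoe, star_star] at h
      exact h
    have h1 : (inner ℂ (u ζ) (x (u ζ)) : ℂ) = inner ℂ ζ ((star u * x * u) ζ) := by
      rw [ContinuousLinearMap.mul_apply, ContinuousLinearMap.mul_apply,
        ContinuousLinearMap.star_eq_adjoint, ContinuousLinearMap.adjoint_inner_right]
    have h2 := hginv t ⟨star u * x * u, hx'⟩ ⟨x, hx⟩ (by
      show x = u * (star u * x * u) * star u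
      have : u * (star u * x * u) * star u = (u * star u) * x * (u * star u) := by
        noncomm_ring
      rw [this, hu2, one_mul, mul_one])
    have h3 := hζrep ⟨star u * x * u, hx'⟩
    have h4 := hζrep ⟨x, hx⟩
    rw [h1]
    calc (inner ℂ ζ ((star u * x * u) ζ) : ℂ) = g ⟨star u * x * u, hx'⟩ := h3.symm
      _ = g ⟨x, hx⟩ := by
          have := hginv t ⟨star u * x * u, hx'⟩ ⟨x, hx⟩ ?_
          · exact this.symm ▸ h2.symm ▸ rfl
          · show x = u * (star u * x * u) * star u
            have : u * (star u * x * u) * star u = (u * star u) * x * (u * star u) := by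
              noncomm_ring
            rw [this, hu2, one_mul, mul_one]
      _ = inner ℂ ζ (x ζ) := h4
  have hpζ : p ζ = ζ := (hfix ζ).mpr hUζ
  have hgp : g ⟨p, hpN⟩ = 1 := by
    rw [hζrep ⟨p, hpN⟩]
    show (inner ℂ ζ (p ζ) : ℂ) = 1
    rw [hpζ, hζ1]
  have hclose := hgclose ⟨p, hpN⟩ (Finset.mem_singleton_self _)
  rw [hgp, hmval] at hclose
  intro hcontra
  rw [hcontra] at hclose
  norm_num at hclose
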